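/- Let G be a group, H a normal subgroup of finite index, and A a G-module on which H acts trivially. Fix a set R of coset representatives of H in G, so that for every r ∈ R and w ∈ G there are unique u(r,w) ∈ H and ρ(r,w) ∈ R with r·w = u(r,w)·ρ(r,w). For a finitely supported 1-cycle x : G → A define y : H → A by y(h) = ∑_{(r,w) ∈ R×G with u(r,w) = h} r·x(w). Then: (i) y is a finitely supported 1-cycle for H; (ii) if x is a 1-boundary then y is a 1-boundary, so the assignment [x] ↦ [y] is a well-defined group homomorphism Tr : H₁(G, A) → H₁(H, A); (iii) the image of Tr is contained in the invariants of H₁(H, A) under the action of G in which g ∈ G acts via the automorphism h ↦ ghg⁻¹ of H and the map a ↦ g·a on A. -/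

import Mathlib

set_option linter.unusedSectionVars false


section Homology

/-- The map sending a finitely supported function `x : G →₀ A` to
`∑ g, (g⁻¹ • x g - x g)`; its kernel is the group of 1-cycles. -/
noncomputable def paperCycleMap (G A : Type*) [Group G] [AddCommGroup A]
    [DistribMulAction G A] : (G →₀ A) →+ A :=
  Finsupp.liftAddHom fun g => DistribMulAction.toAddMonoidHom A g⁻¹ - AddMonoidHom.id A

/-- The group of 1-cycles: finitely supported `x : G →₀ A` with
`∑ g, g⁻¹ • x g = ∑ g, x g`. -/
noncomputable def paperZ1 (G A : Type*) [Group G] [AddCommGroup A]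
    [DistribMulAction G A] : AddSubgroup (G →₀ A) :=
  (paperCycleMap G A).ker

/-- The boundary map of the inhomogeneous bar complex in degree 2: a basis element
`[g₁|g₂]` with coefficient `a` goes to
`single g₂ (g₁⁻¹ • a) - single (g₁g₂) a + single g₁ a`. -/
noncomputable def paperBarD2 (G A : Type*) [Group G] [AddCommGroup A]
    [DistribMulAction G A] : ((G × G) →₀ A) →+ (G →₀ A) :=
  Finsupp.liftAddHom fun p =>
    (Finsupp.singleAddHom p.2).comp (DistribMulAction.toAddMonoidHom A p.1⁻¹)
      + Finsupp.singleAddHom p.1 - Finsupp.singleAddHom (p.1 * p.2)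

/-- The group of 1-boundaries. -/
noncomputable def paperB1 (G A : Type*) [Group G] [AddCommGroup A]
    [DistribMulAction G A] : AddSubgroup (G →₀ A) :=
  (paperBarD2 G A).range

/-- First group homology `H₁(G, A)`: 1-cycles modulo 1-boundaries. -/
noncomputable abbrev paperH1 (G A : Type*) [Group G] [AddCommGroup A]
    [DistribMulAction G A] :=
  paperZ1 G A ⧸ ((paperB1 G A).addSubgroupOf (paperZ1 G A))

end Homology

open Finsupp Finset

section Prep
variable {G A : Type} [Group G] [AddCommGroup A] [DistribMulAction G A] [DecidableEq G]
variable {H : Subgroup G} {R : Set G} {u ρ : G → G → G}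

abbrev HUP (H : Subgroup G) (R : Set G) (u ρ : G → G → G) : Prop :=
  ∀ r ∈ R, ∀ w : G, u r w ∈ H ∧ ρ r w ∈ R ∧ r * w = u r w * ρ r w
abbrev HRR (H : Subgroup G) (R : Set G) : Prop :=
  ∀ g : G, ∃! r : G, r ∈ R ∧ ∃ h ∈ H, g = h * r

theorem rep_unique (hR : HRR H R)
    {r r' h h' : G} (hr : r ∈ R) (hr' : r' ∈ R) (hh : h ∈ H) (hh' : h' ∈ H)
    (e : h * r = h' * r') : r = r' := by
  obtain ⟨s, -, hs⟩ := hR (h * r)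
  have h1 : r = s := hs r ⟨hr, h, hh, rfl⟩
  have h2 : r' = s := hs r' ⟨hr', h', hh', e⟩
  rw [h1, h2]

noncomputable def utH (huρ : HUP H R u ρ) (r w : G) : ↥H := by
  classical exact if hr : r ∈ R then ⟨u r w, (huρ r hr w).1⟩ else 1

theorem utH_coe (huρ : HUP H R u ρ) {r : G} (hr : r ∈ R) (w : G) : (utH huρ r w : G) = u r w := by
  simp [utH, hr]

theorem rho_mem (huρ : HUP H R u ρ) {r : G} (hr : r ∈ R) (w : G) : ρ r w ∈ R := (huρ r hr w).2.1

theorem rw_eq (huρ : HUP H R u ρ) {r : G} (hr : r ∈ R) (w : G) : r * w = u r w * ρ r w := (huρ r hr w).2.2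

theorem mul_struct (huρ : HUP H R u ρ) (hR : HRR H R) {r : G} (hr : r ∈ R) (g₁ g₂ : G) :
    ρ r (g₁ * g₂) = ρ (ρ r g₁) g₂ ∧ u r (g₁ * g₂) = u r g₁ * u (ρ r g₁) g₂ := by
  obtain ⟨hu1, hr1, he1⟩ := huρ r hr g₁
  obtain ⟨hu2, hr2, he2⟩ := huρ (ρ r g₁) hr1 g₂
  obtain ⟨hu3, hr3, he3⟩ := huρ r hr (g₁ * g₂)
  have key : u r (g₁ * g₂) * ρ r (g₁ * g₂) = (u r g₁ * u (ρ r g₁) g₂) * ρ (ρ r g₁) g₂ := by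
    rw [← he3, ← mul_assoc, he1, mul_assoc, he2, mul_assoc]
  have hρ : ρ r (g₁ * g₂) = ρ (ρ r g₁) g₂ :=
    rep_unique hR hr3 hr2 hu3 (mul_mem hu1 hu2) key
  refine ⟨hρ, ?_⟩
  rw [hρ] at key
  exact mul_right_cancel key

theorem rho_inj (huρ : HUP H R u ρ) (hR : HRR H R) {r r' : G} (hr : r ∈ R) (hr' : r' ∈ R) (w : G)
    (e : ρ r w = ρ r' w) : r = r' := by
  obtain ⟨hu, hrr, he⟩ := huρ r hr w
  obtain ⟨hu', hrr', he'⟩ := huρ r' hr' w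
  refine rep_unique hR hr hr' (mul_mem hu' (inv_mem hu)) (one_mem H) ?_
  rw [one_mul]
  have : (u r' w * (u r w)⁻¹ * r) * w = r' * w := by
    rw [he', ← e]
    have : r * w = u r w * ρ r w := he
    rw [show (u r' w * (u r w)⁻¹ * r) * w = u r' w * (u r w)⁻¹ * (r * w) by group, he]
    group
  exact mul_right_cancel this

theorem rho_surj (huρ : HUP H R u ρ) (hR : HRR H R) {s : G} (hs : s ∈ R) (w : G) : ∃ r ∈ R, ρ r w = s := by
  obtain ⟨r, ⟨hr, h, hh, he⟩, -⟩ := hR (s * w⁻¹)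
  refine ⟨r, hr, ?_⟩
  obtain ⟨hu, hrr, he2⟩ := huρ r hr w
  refine (rep_unique hR hrr hs hu (inv_mem hh) ?_)
  rw [← he2]
  rw [eq_inv_mul_iff_mul_eq, show h * (r * w) = (h * r) * w by group, ← he]
  group

noncomputable def kkf (hR : HRR H R) (g r : G) : G := (hR (g * r)).choose

noncomputable def ccf (hR : HRR H R) (g r : G) : G := ((hR (g * r)).choose_spec.1.2).choose

theorem kkf_mem (hR : HRR H R) (g r : G) : kkf hR g r ∈ R := (hR (g * r)).choose_spec.1.1

theorem ccf_mem (hR : HRR H R) (g r : G) : ccf hR g r ∈ H := ((hR (g * r)).choose_spec.1.2).choose_spec.1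

theorem ccf_spec (hR : HRR H R) (g r : G) : g * r = ccf hR g r * kkf hR g r :=
  ((hR (g * r)).choose_spec.1.2).choose_spec.2

theorem kkf_inj (hR : HRR H R) [hN : H.Normal] {g r r' : G} (hr : r ∈ R) (hr' : r' ∈ R)
    (e : kkf hR g r = kkf hR g r') : r = r' := by
  have h1 := ccf_spec hR g r
  have h2 := ccf_spec hR g r'
  rw [← e] at h2
  -- r' = g⁻¹ * ccf g r' * (ccf g r)⁻¹ * g * r
  refine rep_unique hR hr hr'
    (hN.conj_mem _ (mul_mem (ccf_mem hR g r') (inv_mem (ccf_mem hR g r))) g⁻¹)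
    (one_mem H) ?_
  rw [one_mul, inv_inv]
  have hk : kkf hR g r = (ccf hR g r)⁻¹ * (g * r) := by rw [h1]; group
  rw [hk] at h2
  rw [show g⁻¹ * (ccf hR g r' * (ccf hR g r)⁻¹) * g * r
      = g⁻¹ * (ccf hR g r' * ((ccf hR g r)⁻¹ * (g * r))) by group, ← h2]
  group

theorem kkf_surj (hR : HRR H R) [hN : H.Normal] (g : G) {s : G} (hs : s ∈ R) :
    ∃ r ∈ R, kkf hR g r = s := by
  obtain ⟨r, ⟨hr, h, hh, he⟩, -⟩ := hR (g⁻¹ * s)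
  refine ⟨r, hr, ?_⟩
  have h1 : g * r = (g * h⁻¹ * g⁻¹) * s := by
    rw [eq_comm, ← inv_mul_eq_iff_eq_mul] at he
    rw [← he]; group
  refine rep_unique hR (h' := g * h⁻¹ * g⁻¹) (kkf_mem hR g r) hs (ccf_mem hR g r)
    (hN.conj_mem h⁻¹ (inv_mem hh) g) ?_
  rw [← ccf_spec hR g r, h1]

end Prep

section Prep2
variable {G A : Type} [Group G] [AddCommGroup A] [DistribMulAction G A] [DecidableEq G]
variable {H : Subgroup G} {R : Set G} {u ρ : G → G → G}

theorem conj_struct (huρ : HUP H R u ρ) (hR : HRR H R) [hN : H.Normal] {r : G} (hr : r ∈ R)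
    (g w : G) :
    ρ (kkf hR g r) w = kkf hR g (ρ r w) ∧
    g * u r w * g⁻¹ = ccf hR g r * u (kkf hR g r) w * (ccf hR g (ρ r w))⁻¹ := by
  obtain ⟨hu, hρr, he⟩ := huρ r hr w
  obtain ⟨hu2, hρ2, he2⟩ := huρ (kkf hR g r) (kkf_mem hR g r) w
  have l1 : ccf hR g r * u (kkf hR g r) w * ρ (kkf hR g r) w = g * (r * w) := by
    rw [mul_assoc, ← he2, ← mul_assoc, ← ccf_spec hR g r, mul_assoc]
  have l2 : (g * u r w * g⁻¹) * ccf hR g (ρ r w) * kkf hR g (ρ r w) = g * (r * w) := by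
    rw [mul_assoc, ← ccf_spec hR g (ρ r w), he]; group
  have key := l1.trans l2.symm
  have hρeq : ρ (kkf hR g r) w = kkf hR g (ρ r w) :=
    rep_unique hR hρ2 (kkf_mem hR g (ρ r w)) (mul_mem (ccf_mem hR g r) hu2)
      (mul_mem (hN.conj_mem _ hu g) (ccf_mem hR g (ρ r w))) key
  refine ⟨hρeq, ?_⟩
  rw [hρeq] at key
  exact eq_mul_inv_iff_mul_eq.2 (mul_right_cancel key).symm

theorem trivH_smul (htriv : ∀ h ∈ H, ∀ a : A, h • a = a) (h : ↥H) (a : A) : h • a = a :=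
  htriv h h.2 a

theorem memZ1H (htriv : ∀ h ∈ H, ∀ a : A, h • a = a) (z : ↥H →₀ A) :
    z ∈ paperZ1 (↥H) A := by
  rw [paperZ1, AddMonoidHom.mem_ker, paperCycleMap, Finsupp.liftAddHom_apply]
  rw [Finsupp.sum]
  refine Finset.sum_eq_zero fun w _ => ?_
  simp only [AddMonoidHom.sub_apply, AddMonoidHom.id_apply,
    DistribMulAction.toAddMonoidHom_apply]
  rw [trivH_smul htriv, sub_self]

theorem cycle_sum {x : G →₀ A} (hx : x ∈ paperZ1 G A) :
    ∑ w ∈ x.support, w⁻¹ • x w = ∑ w ∈ x.support, x w := by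
  rw [paperZ1, AddMonoidHom.mem_ker, paperCycleMap, Finsupp.liftAddHom_apply,
    Finsupp.sum] at hx
  simp only [AddMonoidHom.sub_apply, AddMonoidHom.id_apply,
    DistribMulAction.toAddMonoidHom_apply] at hx
  rw [Finset.sum_sub_distrib, sub_eq_zero] at hx
  exact hx

theorem barD2_single (p : G × G) (a : A) :
    paperBarD2 G A (Finsupp.single p a)
      = Finsupp.single p.2 (p.1⁻¹ • a) + Finsupp.single p.1 a
        - Finsupp.single (p.1 * p.2) a := by
  rw [paperBarD2, Finsupp.liftAddHom_apply_single]
  simp [AddMonoidHom.sub_apply, AddMonoidHom.add_apply]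

theorem b1_one (a : A) : Finsupp.single (1 : G) a ∈ paperB1 G A := by
  refine ⟨Finsupp.single (1, 1) a, ?_⟩
  rw [barD2_single]
  simp

theorem b1_mul (htriv : ∀ h ∈ H, ∀ a : A, h • a = a) (h₁ h₂ : ↥H) (b : A) :
    Finsupp.single (h₁ * h₂) b - Finsupp.single h₁ b - Finsupp.single h₂ b
      ∈ paperB1 (↥H) A := by
  refine ⟨-Finsupp.single (h₁, h₂) b, ?_⟩
  rw [map_neg, barD2_single]
  have : (h₁⁻¹ : ↥H) • b = b := trivH_smul htriv _ _
  rw [this]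
  abel

theorem b1_inv (htriv : ∀ h ∈ H, ∀ a : A, h • a = a) (h : ↥H) (b : A) :
    Finsupp.single h⁻¹ b + Finsupp.single h b ∈ paperB1 (↥H) A := by
  have h1 := b1_mul htriv h h⁻¹ b
  rw [mul_inv_cancel] at h1
  have h2 := b1_one (G := ↥H) b
  have : Finsupp.single h⁻¹ b + Finsupp.single h b
      = Finsupp.single (1 : ↥H) b
        - (Finsupp.single (1 : ↥H) b - Finsupp.single h b - Finsupp.single h⁻¹ b) := by abel
  rw [this]
  exact sub_mem h2 h1

theorem b1_main (htriv : ∀ h ∈ H, ∀ a : A, h • a = a) (h₁ h₂ h₃ : ↥H) (b : A) :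
    Finsupp.single (h₁ * h₂ * h₃⁻¹) b - Finsupp.single h₂ b - Finsupp.single h₁ b
      + Finsupp.single h₃ b ∈ paperB1 (↥H) A := by
  have m1 := b1_mul htriv (h₁ * h₂) h₃⁻¹ b
  have m2 := b1_mul htriv h₁ h₂ b
  have m3 := b1_inv htriv h₃ b
  have : Finsupp.single (h₁ * h₂ * h₃⁻¹) b - Finsupp.single h₂ b - Finsupp.single h₁ b
      + Finsupp.single h₃ b
      = (Finsupp.single (h₁ * h₂ * h₃⁻¹) b - Finsupp.single (h₁ * h₂) b
          - Finsupp.single h₃⁻¹ b)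
        + (Finsupp.single (h₁ * h₂) b - Finsupp.single h₁ b - Finsupp.single h₂ b)
        + (Finsupp.single h₃⁻¹ b + Finsupp.single h₃ b) := by abel
  rw [this]
  exact add_mem (add_mem m1 m2) m3

end Prep2


section Prep3
variable {G A : Type} [Group G] [AddCommGroup A] [DistribMulAction G A] [DecidableEq G]
variable {H : Subgroup G} {R : Set G} {u ρ : G → G → G}

theorem r_smul_decomp (htriv : ∀ h ∈ H, ∀ a : A, h • a = a) (huρ : HUP H R u ρ)
    {r : G} (hr : r ∈ R) (w : G) (a : A) : r • a = ρ r w • (w⁻¹ • a) := by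
  obtain ⟨hu, hρr, he⟩ := huρ r hr w
  have h1 : r = u r w * ρ r w * w⁻¹ := eq_mul_inv_iff_mul_eq.2 he
  calc r • a = (u r w * ρ r w * w⁻¹) • a := by rw [← h1]
    _ = u r w • ((ρ r w * w⁻¹) • a) := by rw [mul_assoc, mul_smul]
    _ = (ρ r w * w⁻¹) • a := htriv _ hu _
    _ = ρ r w • (w⁻¹ • a) := mul_smul _ _ _

noncomputable def tauT (huρ : HUP H R u ρ) (hRfin : R.Finite) :
    (G →₀ A) →+ (↥H →₀ A) :=
  Finsupp.liftAddHom fun w => ∑ r ∈ hRfin.toFinset,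
    (Finsupp.singleAddHom (utH huρ r w)).comp (DistribMulAction.toAddMonoidHom A r)

theorem tauT_single (huρ : HUP H R u ρ) (hRfin : R.Finite) (w : G) (a : A) :
    tauT huρ hRfin (Finsupp.single w a)
      = ∑ r ∈ hRfin.toFinset, Finsupp.single (utH huρ r w) (r • a) := by
  rw [tauT, Finsupp.liftAddHom_apply_single, AddMonoidHom.finset_sum_apply]
  rfl

theorem tauT_eq (huρ : HUP H R u ρ) (hRfin : R.Finite) (x : G →₀ A) :
    tauT huρ hRfin x = ∑ r ∈ hRfin.toFinset, ∑ w ∈ x.support,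
      Finsupp.single (utH huρ r w) (r • x w) := by
  rw [Finset.sum_comm]
  conv_lhs => rw [← Finsupp.sum_single x]
  rw [map_finsuppSum, Finsupp.sum]
  exact Finset.sum_congr rfl fun w _ => tauT_single huρ hRfin w (x w)

theorem singles_apply (huρ : HUP H R u ρ) (hRfin : R.Finite) (s : Finset G)
    (v : G → G → A) (h : ↥H) :
    (∑ r ∈ hRfin.toFinset, ∑ w ∈ s, Finsupp.single (utH huρ r w) (v r w)) h
      = ∑ r ∈ hRfin.toFinset, ∑ w ∈ s, if u r w = (h : G) then v r w else 0 := by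
  rw [Finsupp.finset_sum_apply]
  refine Finset.sum_congr rfl fun r hr => ?_
  rw [Finsupp.finset_sum_apply]
  refine Finset.sum_congr rfl fun w _ => ?_
  rw [Finsupp.single_apply]
  have hrR : r ∈ R := (Set.Finite.mem_toFinset hRfin).1 hr
  have hiff : (utH huρ r w = h) ↔ (u r w = (h : G)) := by
    rw [← Subtype.coe_inj, utH_coe huρ hrR]
  exact if_congr hiff rfl rfl

theorem eq_of_formula (huρ : HUP H R u ρ) (hRfin : R.Finite) {x : G →₀ A} {Y : ↥H →₀ A}
    (hY : ∀ h : ↥H, Y h = ∑ r ∈ hRfin.toFinset, ∑ w ∈ x.support,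
        if u r w = (h : G) then r • x w else 0) :
    Y = ∑ r ∈ hRfin.toFinset, ∑ w ∈ x.support,
        Finsupp.single (utH huρ r w) (r • x w) :=
  Finsupp.ext fun h => by rw [hY h, singles_apply huρ hRfin]

theorem tau_formula (huρ : HUP H R u ρ) (hRfin : R.Finite) (x : G →₀ A) (h : ↥H) :
    tauT huρ hRfin x h = ∑ r ∈ hRfin.toFinset, ∑ w ∈ x.support,
      if u r w = (h : G) then r • x w else 0 := by
  rw [tauT_eq huρ hRfin, singles_apply huρ hRfin]

noncomputable def sigT (huρ : HUP H R u ρ) (hRfin : R.Finite) :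
    ((G × G) →₀ A) →+ ((↥H × ↥H) →₀ A) :=
  Finsupp.liftAddHom fun p => ∑ r ∈ hRfin.toFinset,
    (Finsupp.singleAddHom (utH huρ r p.1, utH huρ (ρ r p.1) p.2)).comp
      (DistribMulAction.toAddMonoidHom A r)

theorem sigT_single (huρ : HUP H R u ρ) (hRfin : R.Finite) (p : G × G) (a : A) :
    sigT huρ hRfin (Finsupp.single p a)
      = ∑ r ∈ hRfin.toFinset,
          Finsupp.single (utH huρ r p.1, utH huρ (ρ r p.1) p.2) (r • a) := by
  rw [sigT, Finsupp.liftAddHom_apply_single, AddMonoidHom.finset_sum_apply]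
  rfl

theorem comm_square (htriv : ∀ h ∈ H, ∀ a : A, h • a = a) (huρ : HUP H R u ρ)
    (hR : HRR H R) (hRfin : R.Finite) :
    (paperBarD2 (↥H) A).comp (sigT huρ hRfin)
      = (tauT huρ hRfin).comp (paperBarD2 G A) := by
  refine Finsupp.addHom_ext fun p a => ?_
  obtain ⟨g₁, g₂⟩ := p
  rw [AddMonoidHom.comp_apply, AddMonoidHom.comp_apply, sigT_single, barD2_single,
    map_sum, map_sub, map_add, tauT_single, tauT_single, tauT_single]
  have step : ∀ r ∈ hRfin.toFinset,
      paperBarD2 (↥H) A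
        (Finsupp.single (utH huρ r g₁, utH huρ (ρ r g₁) g₂) (r • a))
      = Finsupp.single (utH huρ (ρ r g₁) g₂) (r • a)
        + Finsupp.single (utH huρ r g₁) (r • a)
        - Finsupp.single (utH huρ r g₁ * utH huρ (ρ r g₁) g₂) (r • a) := by
    intro r hr
    rw [barD2_single]
    have : (utH huρ r g₁)⁻¹ • (r • a) = r • a := trivH_smul htriv _ _
    rw [this]
  rw [Finset.sum_congr rfl step]
  rw [Finset.sum_sub_distrib, Finset.sum_add_distrib]
  have e3 : ∑ r ∈ hRfin.toFinset,
        Finsupp.single (utH huρ r g₁ * utH huρ (ρ r g₁) g₂) (r • a)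
      = ∑ r ∈ hRfin.toFinset, Finsupp.single (utH huρ r (g₁ * g₂)) (r • a) := by
    refine Finset.sum_congr rfl fun r hr => ?_
    have hrR : r ∈ R := (Set.Finite.mem_toFinset hRfin).1 hr
    have : utH huρ r g₁ * utH huρ (ρ r g₁) g₂ = utH huρ r (g₁ * g₂) := by
      rw [← Subtype.coe_inj]
      push_cast
      rw [utH_coe huρ hrR, utH_coe huρ (rho_mem huρ hrR g₁), utH_coe huρ hrR,
        (mul_struct huρ hR hrR g₁ g₂).2]
    rw [this]
  have e1 : ∑ r ∈ hRfin.toFinset, Finsupp.single (utH huρ (ρ r g₁) g₂) (r • a)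
      = ∑ r ∈ hRfin.toFinset, Finsupp.single (utH huρ r g₂) (r • (g₁⁻¹ • a)) := by
    refine Finset.sum_bij (fun r _ => ρ r g₁) ?_ ?_ ?_ ?_
    · intro r hr
      exact (Set.Finite.mem_toFinset hRfin).2
        (rho_mem huρ ((Set.Finite.mem_toFinset hRfin).1 hr) g₁)
    · intro r hr r' hr' e
      exact rho_inj huρ hR ((Set.Finite.mem_toFinset hRfin).1 hr)
        ((Set.Finite.mem_toFinset hRfin).1 hr') g₁ e
    · intro s hs
      obtain ⟨r, hrR, hre⟩ := rho_surj huρ hR ((Set.Finite.mem_toFinset hRfin).1 hs) g₁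
      exact ⟨r, (Set.Finite.mem_toFinset hRfin).2 hrR, hre⟩
    · intro r hr
      have hrR : r ∈ R := (Set.Finite.mem_toFinset hRfin).1 hr
      rw [r_smul_decomp htriv huρ hrR g₁ a]
  rw [e1, e3]

theorem tau_maps_B1 (htriv : ∀ h ∈ H, ∀ a : A, h • a = a) (huρ : HUP H R u ρ)
    (hR : HRR H R) (hRfin : R.Finite) {x : G →₀ A} (hx : x ∈ paperB1 G A) :
    tauT huρ hRfin x ∈ paperB1 (↥H) A := by
  obtain ⟨c, hc⟩ := hx
  refine ⟨sigT huρ hRfin c, ?_⟩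
  have := DFunLike.congr_fun (comm_square htriv huρ hR hRfin) c
  rw [AddMonoidHom.comp_apply, AddMonoidHom.comp_apply] at this
  rw [this, hc]

theorem kk_smul (htriv : ∀ h ∈ H, ∀ a : A, h • a = a) (hR : HRR H R)
    (g r : G) (a : A) : kkf hR g r • a = g • r • a := by
  have h1 : kkf hR g r = (ccf hR g r)⁻¹ * (g * r) := by
    rw [ccf_spec hR g r]; group
  rw [h1, mul_smul, htriv _ (inv_mem (ccf_mem hR g r)), mul_smul]


theorem part3 (htriv : ∀ h ∈ H, ∀ a : A, h • a = a) (huρ : HUP H R u ρ)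
    (hR : HRR H R) (hRfin : R.Finite) [hN : H.Normal] (g : G)
    (x : G →₀ A) (hx : x ∈ paperZ1 G A) (Y Y' : ↥H →₀ A)
    (hmem : ∀ h : ↥H, g⁻¹ * (h : G) * g ∈ H)
    (hY : Y = ∑ r ∈ hRfin.toFinset, ∑ w ∈ x.support,
        Finsupp.single (utH huρ r w) (r • x w))
    (hY' : ∀ h : ↥H, Y' h = g • Y ⟨g⁻¹ * (h : G) * g, hmem h⟩) :
    Y' - Y ∈ paperB1 (↥H) A := by
  classical
  have memF : ∀ {r : G}, r ∈ hRfin.toFinset → r ∈ R :=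
    fun hr => (Set.Finite.mem_toFinset hRfin).1 hr
  set k : G → G := kkf hR g with hk
  set ct : G → ↥H := fun r => ⟨ccf hR g r, ccf_mem hR g r⟩ with hct
  -- Step A : reindex Y along the bijection k
  have ykform : Y = ∑ r ∈ hRfin.toFinset, ∑ w ∈ x.support,
      Finsupp.single (utH huρ (k r) w) (k r • x w) := by
    rw [hY]
    refine (Finset.sum_bij (fun r _ => k r) ?_ ?_ ?_ ?_).symm
    · intro r hr; exact (Set.Finite.mem_toFinset hRfin).2 (kkf_mem hR g r)
    · intro r hr r' hr' e; exact kkf_inj hR (memF hr) (memF hr') e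
    · intro s hs
      obtain ⟨r, hrR, hre⟩ := kkf_surj hR g (memF hs)
      exact ⟨r, (Set.Finite.mem_toFinset hRfin).2 hrR, hre⟩
    · intro r hr; rfl
  -- Step B : closed form for Y'
  have y'form : Y' = ∑ r ∈ hRfin.toFinset, ∑ w ∈ x.support,
      Finsupp.single (ct r * utH huρ (k r) w * (ct (ρ r w))⁻¹) (k r • x w) := by
    refine Finsupp.ext fun h => ?_
    have hcoe : ((⟨g⁻¹ * (h : G) * g, hmem h⟩ : ↥H) : G) = g⁻¹ * (h : G) * g := rfl
    rw [hY' h, hY, singles_apply huρ hRfin, hcoe, Finset.smul_sum,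
      Finsupp.finset_sum_apply]
    refine Finset.sum_congr rfl fun r hr => ?_
    rw [Finset.smul_sum, Finsupp.finset_sum_apply]
    refine Finset.sum_congr rfl fun w hw => ?_
    rw [Finsupp.single_apply]
    have hrR : r ∈ R := memF hr
    have hcond : (ct r * utH huρ (k r) w * (ct (ρ r w))⁻¹ = h)
        ↔ (u r w = g⁻¹ * (h : G) * g) := by
      rw [← Subtype.coe_inj]
      push_cast
      rw [utH_coe huρ (kkf_mem hR g r)]
      have : (ccf hR g r) * u (kkf hR g r) w * (ccf hR g (ρ r w))⁻¹
          = g * u r w * g⁻¹ := (conj_struct huρ hR hrR g w).2.symm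
      rw [this]
      constructor
      · intro e; rw [← e]; group
      · intro e; rw [e]; group
    have hval : g • (r • x w) = k r • x w := (kk_smul htriv hR g r (x w)).symm
    by_cases hc : u r w = g⁻¹ * (h : G) * g
    · rw [if_pos hc, if_pos (hcond.2 hc), hval]
    · rw [if_neg hc, if_neg (fun e => hc (hcond.1 e)), smul_zero]
  -- Step C
  have hdiff : Y' - Y = ∑ r ∈ hRfin.toFinset, ∑ w ∈ x.support,
      (Finsupp.single (ct r * utH huρ (k r) w * (ct (ρ r w))⁻¹) (k r • x w)
        - Finsupp.single (utH huρ (k r) w) (k r • x w)) := by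
    rw [y'form, ykform, ← Finset.sum_sub_distrib]
    exact Finset.sum_congr rfl fun r _ => (Finset.sum_sub_distrib _ _).symm
  -- Step D : the two correction sums agree (uses the cycle condition)
  have hS : (∑ r ∈ hRfin.toFinset, ∑ w ∈ x.support,
        Finsupp.single (ct r) (k r • x w))
      = ∑ r ∈ hRfin.toFinset, ∑ w ∈ x.support,
        Finsupp.single (ct (ρ r w)) (k r • x w) := by
    symm
    rw [Finset.sum_comm]
    have inner : ∀ w ∈ x.support,
        (∑ r ∈ hRfin.toFinset, Finsupp.single (ct (ρ r w)) (k r • x w))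
        = ∑ s ∈ hRfin.toFinset, Finsupp.single (ct s) (k s • (w⁻¹ • x w)) := by
      intro w _
      refine Finset.sum_bij (fun r _ => ρ r w) ?_ ?_ ?_ ?_
      · intro r hr
        exact (Set.Finite.mem_toFinset hRfin).2 (rho_mem huρ (memF hr) w)
      · intro r hr r' hr' e; exact rho_inj huρ hR (memF hr) (memF hr') w e
      · intro s hs
        obtain ⟨r, hrR, hre⟩ := rho_surj huρ hR (memF hs) w
        exact ⟨r, (Set.Finite.mem_toFinset hRfin).2 hrR, hre⟩
      · intro r hr
        congr 1
        rw [hk, kk_smul htriv hR, kk_smul htriv hR,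
          r_smul_decomp htriv huρ (memF hr) w]
    rw [Finset.sum_congr rfl inner, Finset.sum_comm]
    refine Finset.sum_congr rfl fun s _ => ?_
    rw [← Finsupp.single_finset_sum, ← Finsupp.single_finset_sum,
      ← Finset.smul_sum, ← Finset.smul_sum, cycle_sum hx]
  -- Step E : conclude
  have key : Y' - Y
      = (∑ r ∈ hRfin.toFinset, ∑ w ∈ x.support,
          (Finsupp.single (ct r * utH huρ (k r) w * (ct (ρ r w))⁻¹) (k r • x w)
            - Finsupp.single (utH huρ (k r) w) (k r • x w)
            - Finsupp.single (ct r) (k r • x w)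
            + Finsupp.single (ct (ρ r w)) (k r • x w)))
        + ((∑ r ∈ hRfin.toFinset, ∑ w ∈ x.support,
              Finsupp.single (ct r) (k r • x w))
          - (∑ r ∈ hRfin.toFinset, ∑ w ∈ x.support,
              Finsupp.single (ct (ρ r w)) (k r • x w))) := by
    rw [hdiff]
    simp only [Finset.sum_add_distrib, Finset.sum_sub_distrib]
    abel
  rw [key, hS, sub_self, add_zero]
  refine sum_mem fun r hr => sum_mem fun w hw => ?_
  exact b1_main htriv (ct r) (utH huρ (k r) w) (ct (ρ r w)) (k r • x w)

end Prep3

/-- Let `G` be a group, `H` a normal subgroup of finite index acting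
trivially on the `G`-module `A`, and `R` a set of coset representatives, so that each
`r·w` (`r ∈ R`, `w ∈ G`) is uniquely `u(r,w)·ρ(r,w)` with `u(r,w) ∈ H`, `ρ(r,w) ∈ R`.
For a finitely supported 1-cycle `x : G → A` put
`y h = ∑_{(r,w), u(r,w) = h} r • x w`.  Then (i) `y` is a finitely supported 1-cycle for
`H`; (ii) `[x] ↦ [y]` is a well-defined homomorphism `Tr : H₁(G, A) → H₁(H, A)`; and
(iii) the image of `Tr` consists of classes invariant under the action of `G` on
`H₁(H, A)` (acting by `h ↦ g h g⁻¹` on `H` and by `g` on `A`). -/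
theorem stmt3 {G A : Type} [Group G] [AddCommGroup A] [DistribMulAction G A]
    [DecidableEq G] (H : Subgroup G) [hN : H.Normal] [H.FiniteIndex]
    (htriv : ∀ h ∈ H, ∀ a : A, h • a = a)
    (R : Set G) (hRfin : R.Finite)
    (hR : ∀ g : G, ∃! r : G, r ∈ R ∧ ∃ h ∈ H, g = h * r)
    (u ρ : G → G → G)
    (huρ : ∀ r ∈ R, ∀ w : G, u r w ∈ H ∧ ρ r w ∈ R ∧ r * w = u r w * ρ r w) :
    (∀ x : paperZ1 G A, ∃ y : paperZ1 (↥H) A, ∀ h : ↥H,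
        (y : (↥H) →₀ A) h
          = ∑ r ∈ hRfin.toFinset, ∑ w ∈ (x : G →₀ A).support,
              (if u r w = (h : G) then r • (x : G →₀ A) w else 0)) ∧
      ∃ Tr : paperH1 G A →+ paperH1 (↥H) A,
        (∀ (x : paperZ1 G A) (y : paperZ1 (↥H) A),
          (∀ h : ↥H, (y : (↥H) →₀ A) h
              = ∑ r ∈ hRfin.toFinset, ∑ w ∈ (x : G →₀ A).support,
                  (if u r w = (h : G) then r • (x : G →₀ A) w else 0)) →
          Tr (QuotientAddGroup.mk x) = QuotientAddGroup.mk y) ∧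
        (∀ (g : G) (x : paperZ1 G A) (y y' : paperZ1 (↥H) A),
          (∀ h : ↥H, (y : (↥H) →₀ A) h
              = ∑ r ∈ hRfin.toFinset, ∑ w ∈ (x : G →₀ A).support,
                  (if u r w = (h : G) then r • (x : G →₀ A) w else 0)) →
          (∀ h : ↥H, (y' : (↥H) →₀ A) h
              = g • (y : (↥H) →₀ A)
                  ⟨g⁻¹ * (h : G) * g, by simpa using hN.conj_mem _ h.2 g⁻¹⟩) →
          (QuotientAddGroup.mk y' : paperH1 (↥H) A) = QuotientAddGroup.mk y) := by
    classical
  have fmem : ∀ z : (↥H) →₀ A, z ∈ paperZ1 (↥H) A := memZ1H htriv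
  let fτ : ↥(paperZ1 G A) →+ ↥(paperZ1 (↥H) A) :=
    AddMonoidHom.codRestrict ((tauT huρ hRfin).comp (paperZ1 G A).subtype) _
      (fun z => fmem _)
  have fτ_coe : ∀ x : paperZ1 G A,
      (fτ x : (↥H) →₀ A) = tauT huρ hRfin (x : G →₀ A) := fun x => rfl
  have formula_unique : ∀ (x : paperZ1 G A) (y : paperZ1 (↥H) A),
      (∀ h : ↥H, (y : (↥H) →₀ A) h
          = ∑ r ∈ hRfin.toFinset, ∑ w ∈ (x : G →₀ A).support,
              (if u r w = (h : G) then r • (x : G →₀ A) w else 0)) → y = fτ x := by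
    intro x y hy
    refine Subtype.ext ?_
    rw [fτ_coe, eq_of_formula huρ hRfin hy, tauT_eq huρ hRfin]
  constructor
  · intro x
    refine ⟨fτ x, fun h => ?_⟩
    rw [fτ_coe, tau_formula huρ hRfin]
  · have hle : (paperB1 G A).addSubgroupOf (paperZ1 G A) ≤
        (((paperB1 (↥H) A).addSubgroupOf (paperZ1 (↥H) A)).comap fτ) := by
      intro z hz
      rw [AddSubgroup.mem_addSubgroupOf] at hz
      rw [AddSubgroup.mem_comap, AddSubgroup.mem_addSubgroupOf, fτ_coe]
      exact tau_maps_B1 htriv huρ hR hRfin hz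
    refine ⟨QuotientAddGroup.map _ _ fτ hle, ?_, ?_⟩
    · intro x y hy
      rw [QuotientAddGroup.map_mk, formula_unique x y hy]
    · intro g x y y' hy hy'
      have hY : (y : (↥H) →₀ A) = ∑ r ∈ hRfin.toFinset,
          ∑ w ∈ (x : G →₀ A).support,
            Finsupp.single (utH huρ r w) (r • (x : G →₀ A) w) :=
        eq_of_formula huρ hRfin hy
      have m : (y' : (↥H) →₀ A) - (y : (↥H) →₀ A) ∈ paperB1 (↥H) A :=
        part3 htriv huρ hR hRfin g (x : G →₀ A) x.2 (y : (↥H) →₀ A)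
          (y' : (↥H) →₀ A) (fun h => by simpa using hN.conj_mem _ h.2 g⁻¹) hY hy'
      rw [QuotientAddGroup.eq]
      rw [AddSubgroup.mem_addSubgroupOf]
      have m2 := neg_mem m
      rw [neg_sub, sub_eq_neg_add] at m2
      exact m2
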